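/- arXiv:2007.13830 — 4 statements merged into one kernel-verified Lean document; each statement's English description precedes it below -/
import Mathlib

section
/- Let a, b, c, d > 0 be real numbers and 4 < p < 6. Then the function g(t) = (a/2)t^2 + (b/4)t^4 - (c/p)t^p - (d/6)t^6 on [0,∞) attains a positive maximum at some t₀ > 0, and t₀ is the unique positive critical point of g; moreover g(t) < 0 for all sufficiently large t and g(t) > 0 for all sufficiently small t > 0. -/
open Real Set

private lemma aux_hasDerivAt (a b c d p : ℝ) (hp : 0 < p)
    (g : ℝ → ℝ)
    (hg : ∀ t : ℝ, g t = a / 2 * t ^ 2 + b / 4 * t ^ 4 - c / p * t ^ p - d / 6 * t ^ 6)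
    {t : ℝ} (ht : t ≠ 0) :
    HasDerivAt g (a * t + b * t ^ 3 - c * t ^ (p - 1) - d * t ^ 5) t := by
  have h1 : HasDerivAt (fun x : ℝ => a / 2 * x ^ 2 + b / 4 * x ^ 4 - c / p * x ^ p - d / 6 * x ^ 6)
      (a / 2 * ((2 : ℕ) * t ^ 1) + b / 4 * ((4 : ℕ) * t ^ 3) - c / p * (p * t ^ (p - 1))
        - d / 6 * ((6 : ℕ) * t ^ 5)) t := by
    exact ((((hasDerivAt_pow 2 t).const_mul _).add ((hasDerivAt_pow 4 t).const_mul _)).sub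
      ((Real.hasDerivAt_rpow_const (Or.inl ht)).const_mul _)).sub
      ((hasDerivAt_pow 6 t).const_mul _)
  have hfun : g = fun x : ℝ => a / 2 * x ^ 2 + b / 4 * x ^ 4 - c / p * x ^ p - d / 6 * x ^ 6 :=
    funext hg
  rw [hfun]
  convert h1 using 1
  push_cast
  field_simp

set_option maxHeartbeats 1000000 in
theorem stmt_0 (a b c d p : ℝ) (ha : 0 < a) (hb : 0 < b) (hc : 0 < c) (hd : 0 < d)
    (hp4 : 4 < p) (hp6 : p < 6)
    (g : ℝ → ℝ)
    (hg : ∀ t : ℝ, g t = a / 2 * t ^ 2 + b / 4 * t ^ 4 - c / p * t ^ p - d / 6 * t ^ 6) :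
    ∃ t₀ : ℝ, 0 < t₀ ∧ IsMaxOn g (Set.Ici (0 : ℝ)) t₀ ∧ 0 < g t₀ ∧
      deriv g t₀ = 0 ∧ (∀ t : ℝ, 0 < t → deriv g t = 0 → t = t₀) ∧
      (∃ T : ℝ, 0 < T ∧ ∀ t ≥ T, g t < 0) ∧
      (∃ δ : ℝ, 0 < δ ∧ ∀ t : ℝ, 0 < t → t < δ → 0 < g t) := by
  have hp : 0 < p := by linarith
  have hg0 : g 0 = 0 := by
    rw [hg, Real.zero_rpow (by linarith : p ≠ 0)]
    norm_num
  -- continuity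
  have hcont : Continuous g := by
    have hfun : g = fun x : ℝ => a / 2 * x ^ 2 + b / 4 * x ^ 4 - c / p * x ^ p - d / 6 * x ^ 6 :=
      funext hg
    rw [hfun]
    exact (((continuous_const.mul (continuous_pow 2)).add
      (continuous_const.mul (continuous_pow 4))).sub
      (continuous_const.mul (continuous_id.rpow_const fun _ => Or.inr hp.le))).sub
      (continuous_const.mul (continuous_pow 6))
  -- small t positivity
  obtain ⟨K, hKdef⟩ : ∃ K : ℝ, K = c / p + d / 6 := ⟨_, rfl⟩
  have hK : 0 < K := by rw [hKdef]; positivity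
  obtain ⟨δ, hδdef⟩ : ∃ δ : ℝ, δ = min 1 (Real.sqrt (a / (2 * K))) := ⟨_, rfl⟩
  have hδpos : 0 < δ := hδdef ▸ lt_min one_pos (Real.sqrt_pos.mpr (by positivity))
  have hδ1 : δ ≤ 1 := hδdef ▸ min_le_left _ _
  have hsmall : ∀ t : ℝ, 0 < t → t < δ → 0 < g t := by
    intro t ht htδ
    have ht1 : t ≤ 1 := le_of_lt (lt_of_lt_of_le htδ hδ1)
    have hsplit : t ^ p = t ^ (p - 2) * t ^ 2 := by
      rw [show p = (p - 2) + 2 by ring, Real.rpow_add ht, ← Real.rpow_natCast t 2]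
      norm_num
    have hle : t ^ (p - 2) ≤ t ^ 2 := by
      calc t ^ (p - 2) ≤ t ^ (2 : ℝ) :=
            Real.rpow_le_rpow_of_exponent_ge ht ht1 (by linarith)
        _ = t ^ 2 := by rw [← Real.rpow_natCast t 2]; norm_num
    have ht2 : t ^ 2 < a / (2 * K) := by
      have h1 : t < Real.sqrt (a / (2 * K)) := lt_of_lt_of_le htδ (hδdef ▸ min_le_right _ _)
      nlinarith [Real.sq_sqrt (show (0:ℝ) ≤ a / (2 * K) by positivity),
        Real.sqrt_nonneg (a / (2 * K)), ht.le]
    have hcp : c / p * t ^ p ≤ c / p * (t ^ 2 * t ^ 2) := by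
      rw [hsplit]
      apply mul_le_mul_of_nonneg_left _ (by positivity : (0:ℝ) ≤ c / p)
      exact mul_le_mul_of_nonneg_right hle (sq_nonneg t)
    have h6 : t ^ 6 ≤ t ^ 2 * t ^ 2 := by
      have := pow_le_pow_of_le_one ht.le ht1 (by norm_num : 4 ≤ 6)
      nlinarith
    have hKt : K * t ^ 2 < a / 2 := by
      have h := (lt_div_iff₀ (by positivity : (0:ℝ) < 2 * K)).mp ht2
      have h2 : K * t ^ 2 = t ^ 2 * (2 * K) / 2 := by ring
      linarith
    have hd6 : d / 6 * t ^ 6 ≤ d / 6 * (t ^ 2 * t ^ 2) :=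
      mul_le_mul_of_nonneg_left h6 (by positivity)
    have hKt2 : K * t ^ 2 * t ^ 2 < a / 2 * t ^ 2 :=
      mul_lt_mul_of_pos_right hKt (pow_pos ht 2)
    rw [hg]
    nlinarith [hcp, hd6, hKt2, pow_pos ht 4, hb]
  -- large t negativity
  obtain ⟨M, hMdef⟩ : ∃ M : ℝ, M = (3 * a + 3 / 2 * b + 6) / d := ⟨_, rfl⟩
  have hM : 0 < M := by rw [hMdef]; positivity
  obtain ⟨T, hTdef⟩ : ∃ T : ℝ, T = max 1 (Real.sqrt M) := ⟨_, rfl⟩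
  have hT1 : (1 : ℝ) ≤ T := hTdef ▸ le_max_left _ _
  have hTpos : 0 < T := lt_of_lt_of_le one_pos hT1
  have hTM : M ≤ T ^ 2 := by
    have h1 : Real.sqrt M ≤ T := hTdef ▸ le_max_right _ _
    have := Real.sq_sqrt hM.le
    nlinarith [Real.sqrt_nonneg M]
  have hlarge : ∀ t ≥ T, g t < 0 := by
    intro t htT
    have ht1 : (1 : ℝ) ≤ t := le_trans hT1 htT
    have ht0 : 0 < t := lt_of_lt_of_le one_pos ht1
    have htM : M ≤ t ^ 2 := le_trans hTM (by nlinarith)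
    have hdt : 3 * a + 3 / 2 * b + 6 ≤ d * t ^ 2 := by
      rw [hMdef] at htM
      rw [div_le_iff₀ hd] at htM
      linarith
    have hrp : 0 < c / p * t ^ p := by positivity
    have h24 : t ^ 2 ≤ t ^ 4 := pow_le_pow_right₀ ht1 (by norm_num)
    have key1 : (3 * a + 3 / 2 * b + 6) * t ^ 4 ≤ d * t ^ 2 * t ^ 4 :=
      mul_le_mul_of_nonneg_right hdt (pow_nonneg ht0.le 4)
    have h24' : a / 2 * t ^ 2 ≤ a / 2 * t ^ 4 :=
      mul_le_mul_of_nonneg_left h24 (by positivity)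
    have key2 : d * t ^ 2 * t ^ 4 = d * t ^ 6 := by ring
    rw [hg]
    linarith [key1, hrp, h24', pow_pos ht0 4, key2.symm.le, key2.le]
  -- maximum on the compact interval
  obtain ⟨t₀, ht₀mem, hmaxIcc⟩ :=
    (isCompact_Icc (a := (0:ℝ)) (b := T)).exists_isMaxOn ⟨0, by constructor <;> simp [hTpos.le]⟩
      hcont.continuousOn
  have hδT : δ / 2 ∈ Icc (0:ℝ) T := ⟨by linarith, by linarith⟩
  have hgδ : 0 < g (δ / 2) := hsmall _ (by linarith) (by linarith)
  have hgt₀ : 0 < g t₀ := lt_of_lt_of_le hgδ (hmaxIcc hδT)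
  have ht₀pos : 0 < t₀ := by
    rcases lt_or_eq_of_le ht₀mem.1 with h | h
    · exact h
    · exfalso; rw [← h, hg0] at hgt₀; exact lt_irrefl 0 hgt₀
  have hmaxIci : IsMaxOn g (Set.Ici (0 : ℝ)) t₀ := by
    intro t ht
    by_cases htT : t ≤ T
    · exact hmaxIcc ⟨ht, htT⟩
    · have : g t < 0 := hlarge t (le_of_not_ge htT)
      simp only [mem_setOf_eq]
      linarith
  have hloc : IsLocalMax g t₀ :=
    hmaxIci.isLocalMax (Filter.mem_of_superset (Ioi_mem_nhds ht₀pos) Ioi_subset_Ici_self)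
  have hderiv0 : deriv g t₀ = 0 := hloc.deriv_eq_zero
  -- deriv formula
  have hder : ∀ t : ℝ, 0 < t → deriv g t = a * t + b * t ^ 3 - c * t ^ (p - 1) - d * t ^ 5 :=
    fun t ht => (aux_hasDerivAt a b c d p hp g hg ht.ne').deriv
  -- uniqueness core: two positive critical points are equal
  have huniq : ∀ s u : ℝ, 0 < s → 0 < u → deriv g s = 0 → deriv g u = 0 → s = u := by
    intro s u hs hu hds hdu
    rcases lt_trichotomy s u with h | h | h
    · exfalso
      have hsplit : ∀ x : ℝ, 0 < x → x ^ (p - 1) = x ^ (p - 4) * x ^ 3 := by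
        intro x hx
        rw [show p - 1 = (p - 4) + 3 by ring, Real.rpow_add hx, ← Real.rpow_natCast x 3]
        norm_num
      have hA : (0:ℝ) < s ^ (p - 4) := Real.rpow_pos_of_pos hs _
      have hAB : s ^ (p - 4) < u ^ (p - 4) := Real.rpow_lt_rpow hs.le h (by linarith)
      have e1 : a * s + b * s ^ 3 - c * (s ^ (p - 4) * s ^ 3) - d * s ^ 5 = 0 := by
        rw [← hsplit s hs, ← hder s hs]; exact hds
      have e2 : a * u + b * u ^ 3 - c * (u ^ (p - 4) * u ^ 3) - d * u ^ 5 = 0 := by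
        rw [← hsplit u hu, ← hder u hu]; exact hdu
      set A := s ^ (p - 4)
      set B := u ^ (p - 4)
      have key : a * (s * u) * (u ^ 2 - s ^ 2) =
          c * (s ^ 3 * u ^ 3) * (A - B) + d * (s ^ 3 * u ^ 3) * (s ^ 2 - u ^ 2) := by
        linear_combination u ^ 3 * e1 - s ^ 3 * e2
      have h1 : 0 < a * (s * u) * (u ^ 2 - s ^ 2) := by
        apply mul_pos (by positivity)
        nlinarith
      have h2 : c * (s ^ 3 * u ^ 3) * (A - B) + d * (s ^ 3 * u ^ 3) * (s ^ 2 - u ^ 2) < 0 := by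
        have hd1 : A - B < 0 := by linarith
        have hd2 : s ^ 2 - u ^ 2 < 0 := by nlinarith
        have q1 : c * (s ^ 3 * u ^ 3) * (A - B) < 0 :=
          mul_neg_of_pos_of_neg (by positivity) hd1
        have q2 : d * (s ^ 3 * u ^ 3) * (s ^ 2 - u ^ 2) < 0 :=
          mul_neg_of_pos_of_neg (by positivity) hd2
        linarith
      linarith [key ▸ h1]
    · exact h
    · exfalso
      -- symmetric case: swap s and u
      have hsplit : ∀ x : ℝ, 0 < x → x ^ (p - 1) = x ^ (p - 4) * x ^ 3 := by
        intro x hx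
        rw [show p - 1 = (p - 4) + 3 by ring, Real.rpow_add hx, ← Real.rpow_natCast x 3]
        norm_num
      have hA : (0:ℝ) < u ^ (p - 4) := Real.rpow_pos_of_pos hu _
      have hAB : u ^ (p - 4) < s ^ (p - 4) := Real.rpow_lt_rpow hu.le h (by linarith)
      have e1 : a * u + b * u ^ 3 - c * (u ^ (p - 4) * u ^ 3) - d * u ^ 5 = 0 := by
        rw [← hsplit u hu, ← hder u hu]; exact hdu
      have e2 : a * s + b * s ^ 3 - c * (s ^ (p - 4) * s ^ 3) - d * s ^ 5 = 0 := by
        rw [← hsplit s hs, ← hder s hs]; exact hds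
      set A := u ^ (p - 4)
      set B := s ^ (p - 4)
      have key : a * (u * s) * (s ^ 2 - u ^ 2) =
          c * (u ^ 3 * s ^ 3) * (A - B) + d * (u ^ 3 * s ^ 3) * (u ^ 2 - s ^ 2) := by
        linear_combination s ^ 3 * e1 - u ^ 3 * e2
      have h1 : 0 < a * (u * s) * (s ^ 2 - u ^ 2) := by
        apply mul_pos (by positivity)
        nlinarith
      have h2 : c * (u ^ 3 * s ^ 3) * (A - B) + d * (u ^ 3 * s ^ 3) * (u ^ 2 - s ^ 2) < 0 := by
        have hd1 : A - B < 0 := by linarith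
        have hd2 : u ^ 2 - s ^ 2 < 0 := by nlinarith
        have q1 : c * (u ^ 3 * s ^ 3) * (A - B) < 0 :=
          mul_neg_of_pos_of_neg (by positivity) hd1
        have q2 : d * (u ^ 3 * s ^ 3) * (u ^ 2 - s ^ 2) < 0 :=
          mul_neg_of_pos_of_neg (by positivity) hd2
        linarith
      linarith [key ▸ h1]
  refine ⟨t₀, ht₀pos, hmaxIci, hgt₀, hderiv0, fun t ht hdt => huniq t t₀ ht ht₀pos hdt hderiv0,
    ⟨T, hTpos, hlarge⟩, ⟨δ, hδpos, hsmall⟩⟩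
end

section
/- Let V : ℝ³ → ℝ be measurable with V ≥ 0, and suppose the set A = {x : V(x) ≤ M₀} has finite Lebesgue measure for some M₀ > 0. For λ ≥ 1 define ‖u‖_λ² = ∫(|∇u|² + λV u²). Then there exists κ > 0 (independent of λ ≥ 1) such that ‖u‖_λ ≥ κ‖u‖_{H¹} for all u in E = {u ∈ H¹(ℝ³) : ∫V u² < ∞}. -/
open MeasureTheory Real

local notation "E3" => EuclideanSpace ℝ (Fin 3)

theorem CS_aux {α : Type*} [MeasurableSpace α] (ν : Measure α) (f : α → ℝ)
    (hm : AEMeasurable f ν) (hf : Integrable f ν) (h0 : 0 ≤ᵐ[ν] f) :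
    ENNReal.ofReal (∫ a, f a ∂ν) ^ 2 ≤ ν Set.univ * ∫⁻ a, ENNReal.ofReal (f a) ^ 2 ∂ν := by
  have h1 : ENNReal.ofReal (∫ a, f a ∂ν) ≤ ∫⁻ a, ENNReal.ofReal (f a) ∂ν := by
    rw [MeasureTheory.ofReal_integral_eq_lintegral_ofReal hf h0]
  have h2 : ∫⁻ a, ENNReal.ofReal (f a) ∂ν ≤
      (∫⁻ a, ENNReal.ofReal (f a) ^ (2:ℝ) ∂ν) ^ (1/2 : ℝ) * (ν Set.univ) ^ (1/2 : ℝ) := by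
    have := ENNReal.lintegral_mul_le_Lp_mul_Lq ν (p := 2) (q := 2)
      (Real.HolderTriple.mk (by norm_num) (by norm_num) (by norm_num))
      (hm.ennreal_ofReal) aemeasurable_const (g := fun _ => (1 : ENNReal))
    simpa using this
  have h3 := le_trans h1 h2
  calc ENNReal.ofReal (∫ a, f a ∂ν) ^ 2
      ≤ ((∫⁻ a, ENNReal.ofReal (f a) ^ (2:ℝ) ∂ν) ^ (1/2 : ℝ) * (ν Set.univ) ^ (1/2 : ℝ)) ^ 2 :=
        pow_le_pow_left' h3 2
    _ = ν Set.univ * ∫⁻ a, ENNReal.ofReal (f a) ^ 2 ∂ν := by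
        rw [mul_pow, ← ENNReal.rpow_natCast (_ ^ (1/2:ℝ)) 2, ← ENNReal.rpow_natCast (_ ^ (1/2:ℝ)) 2,
          ← ENNReal.rpow_mul, ← ENNReal.rpow_mul]
        norm_num [mul_comm]


theorem grad_norm_eq (u : E3 → ℝ) (y : E3) : ‖gradient u y‖ = ‖fderiv ℝ u y‖ := by
  rw [gradient]
  exact LinearIsometryEquiv.norm_map _ _

theorem ftc_bound (u : E3 → ℝ) (hu : Differentiable ℝ u) (x h : E3) :
    ENNReal.ofReal ((u (x + h) - u x) ^ 2) ≤ ENNReal.ofReal (‖h‖ ^ 2) *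
      ∫⁻ t in Set.Icc (0:ℝ) 1, ENNReal.ofReal (‖gradient u (x + t • h)‖ ^ 2) := by
  rcases eq_or_ne h 0 with rfl | hh
  · simp
  set g : E3 → ℝ := fun y => ‖fderiv ℝ u y‖ with hg
  have hgmeas : Measurable g := (measurable_fderiv ℝ u).norm
  have hline : Continuous fun t : ℝ => x + t • h := by continuity
  have hgl : Measurable fun t : ℝ => g (x + t • h) := hgmeas.comp hline.measurable
  have hgrw : ∀ y, ‖gradient u y‖ = g y := fun y => grad_norm_eq u y
  simp only [hgrw]
  by_cases hI : (∫⁻ t in Set.Icc (0:ℝ) 1, ENNReal.ofReal (g (x + t • h) ^ 2)) = ⊤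
  · rw [hI, ENNReal.mul_top]
    · exact le_top
    · simp [pow_eq_zero_iff, norm_eq_zero, hh]
  -- main case: the square of gradient along segment is integrable
  have hsq : IntegrableOn (fun t => g (x + t • h) ^ 2) (Set.Icc (0:ℝ) 1) := by
    refine ⟨(hgl.pow_const 2).aestronglyMeasurable, ?_⟩
    rw [hasFiniteIntegral_iff_ofReal]
    · exact Ne.lt_top (by simpa using hI)
    · exact Filter.Eventually.of_forall fun t => sq_nonneg _
  have hgint : IntegrableOn (fun t => g (x + t • h)) (Set.Icc (0:ℝ) 1) := by
    refine Integrable.mono' ((integrable_const (1:ℝ)).add hsq) hgl.aestronglyMeasurable ?_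
    refine Filter.Eventually.of_forall fun t => ?_
    have h0 : (0:ℝ) ≤ g (x + t • h) := norm_nonneg _
    rw [Real.norm_of_nonneg h0]
    simp only [Pi.add_apply]
    nlinarith [sq_nonneg (g (x + t • h) - 1)]
  set φ : ℝ → ℝ := fun t => u (x + t • h) with hφ
  set φ' : ℝ → ℝ := fun t => (fderiv ℝ u (x + t • h)) h with hφ'
  have hderiv : ∀ t : ℝ, HasDerivAt φ (φ' t) t := by
    intro t
    have h1 : HasDerivAt (fun s : ℝ => x + s • h) h t := by
      simpa using ((hasDerivAt_id t).smul_const h).const_add x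
    exact (hu (x + t • h)).hasFDerivAt.comp_hasDerivAt t h1
  have hφ'meas : Measurable φ' :=
    (measurable_fderiv_apply_const ℝ u h).comp hline.measurable
  have hφ'bound : ∀ t, |φ' t| ≤ ‖h‖ * g (x + t • h) := by
    intro t
    calc |φ' t| = ‖(fderiv ℝ u (x + t • h)) h‖ := (Real.norm_eq_abs _).symm
      _ ≤ g (x + t • h) * ‖h‖ := ContinuousLinearMap.le_opNorm _ _
      _ = ‖h‖ * g (x + t • h) := mul_comm _ _
  have hφ'int : IntegrableOn φ' (Set.Icc (0:ℝ) 1) := by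
    refine Integrable.mono' (hgint.const_mul ‖h‖) hφ'meas.aestronglyMeasurable ?_
    exact Filter.Eventually.of_forall fun t => by
      simpa [Real.norm_eq_abs] using hφ'bound t
  have hIcc : (∫ t in (0:ℝ)..1, φ' t) = φ 1 - φ 0 :=
    intervalIntegral.integral_eq_sub_of_hasDerivAt (fun t _ => hderiv t)
      ((intervalIntegrable_iff_integrableOn_Icc_of_le zero_le_one).mpr hφ'int)
  have hval : u (x + h) - u x = ∫ t in (0:ℝ)..1, φ' t := by
    rw [hIcc]; simp [hφ]
  have habs : |u (x + h) - u x| ≤ ‖h‖ * ∫ t in Set.Icc (0:ℝ) 1, g (x + t • h) := by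
    rw [hval]
    calc |∫ t in (0:ℝ)..1, φ' t| ≤ ∫ t in (0:ℝ)..1, |φ' t| :=
          intervalIntegral.abs_integral_le_integral_abs zero_le_one
      _ = ∫ t in Set.Icc (0:ℝ) 1, |φ' t| := by
          rw [intervalIntegral.integral_of_le zero_le_one,
            MeasureTheory.integral_Icc_eq_integral_Ioc]
      _ ≤ ∫ t in Set.Icc (0:ℝ) 1, ‖h‖ * g (x + t • h) := by
          refine setIntegral_mono_on hφ'int.abs (hgint.const_mul ‖h‖) measurableSet_Icc fun t _ => hφ'bound t
      _ = ‖h‖ * ∫ t in Set.Icc (0:ℝ) 1, g (x + t • h) := integral_const_mul _ _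
  have hJnn : (0:ℝ) ≤ ∫ t in Set.Icc (0:ℝ) 1, g (x + t • h) :=
    integral_nonneg fun t => norm_nonneg _
  set J : ℝ := ∫ t in Set.Icc (0:ℝ) 1, g (x + t • h) with hJ
  have hCS := CS_aux (volume.restrict (Set.Icc (0:ℝ) 1)) (fun t => g (x + t • h))
    hgl.aemeasurable hgint (Filter.Eventually.of_forall fun t => norm_nonneg _)
  rw [Measure.restrict_apply_univ, Real.volume_Icc] at hCS
  simp only [sub_zero, ENNReal.ofReal_one, one_mul] at hCS
  calc ENNReal.ofReal ((u (x + h) - u x) ^ 2)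
      ≤ ENNReal.ofReal ((‖h‖ * J) ^ 2) := by
        apply ENNReal.ofReal_le_ofReal
        rw [← sq_abs (u (x + h) - u x)]
        have h2 : (0:ℝ) ≤ ‖h‖ * J := mul_nonneg (norm_nonneg _) hJnn
        nlinarith [abs_nonneg (u (x + h) - u x)]
    _ = ENNReal.ofReal (‖h‖ ^ 2) * ENNReal.ofReal J ^ 2 := by
        rw [mul_pow, ENNReal.ofReal_mul (by positivity), ENNReal.ofReal_pow hJnn]
    _ ≤ ENNReal.ofReal (‖h‖ ^ 2) *
        ∫⁻ t in Set.Icc (0:ℝ) 1, ENNReal.ofReal (g (x + t • h) ^ 2) := by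
        refine mul_le_mul_right ?_ _
        refine le_trans hCS (lintegral_mono fun t => ?_)
        rw [ENNReal.ofReal_pow (norm_nonneg _)]

theorem translation_bound (u : E3 → ℝ) (hu : Differentiable ℝ u) (h : E3) :
    ∫⁻ x, ENNReal.ofReal ((u (x + h) - u x) ^ 2) ≤
      ENNReal.ofReal (‖h‖ ^ 2) * ∫⁻ x, ENNReal.ofReal (‖gradient u x‖ ^ 2) := by
  have hgmeas : Measurable fun y : E3 => ENNReal.ofReal (‖gradient u y‖ ^ 2) := by
    have heq : (fun y : E3 => ENNReal.ofReal (‖gradient u y‖ ^ 2)) =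
        fun y => ENNReal.ofReal (‖fderiv ℝ u y‖ ^ 2) := by
      ext y; rw [grad_norm_eq u y]
    rw [heq]
    exact ((measurable_fderiv ℝ u).norm.pow_const 2).ennreal_ofReal
  have hprod : Measurable fun p : E3 × ℝ =>
      ENNReal.ofReal (‖gradient u (p.1 + p.2 • h)‖ ^ 2) := by
    have hm : Measurable fun p : E3 × ℝ => p.1 + p.2 • h :=
      measurable_fst.add (measurable_snd.smul_const h)
    exact hgmeas.comp hm
  calc ∫⁻ x, ENNReal.ofReal ((u (x + h) - u x) ^ 2)
      ≤ ∫⁻ x, ENNReal.ofReal (‖h‖ ^ 2) *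
          ∫⁻ t in Set.Icc (0:ℝ) 1, ENNReal.ofReal (‖gradient u (x + t • h)‖ ^ 2) :=
        lintegral_mono fun x => ftc_bound u hu x h
    _ = ENNReal.ofReal (‖h‖ ^ 2) * ∫⁻ x, ∫⁻ t in Set.Icc (0:ℝ) 1,
          ENNReal.ofReal (‖gradient u (x + t • h)‖ ^ 2) :=
        lintegral_const_mul' _ _ ENNReal.ofReal_ne_top
    _ = ENNReal.ofReal (‖h‖ ^ 2) * ∫⁻ t in Set.Icc (0:ℝ) 1, ∫⁻ x,
          ENNReal.ofReal (‖gradient u (x + t • h)‖ ^ 2) := by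
        rw [lintegral_lintegral_swap hprod.aemeasurable]
    _ = ENNReal.ofReal (‖h‖ ^ 2) * ∫⁻ t in Set.Icc (0:ℝ) 1,
          (∫⁻ x, ENNReal.ofReal (‖gradient u x‖ ^ 2)) := by
        congr 1
        refine setLIntegral_congr_fun measurableSet_Icc
          (fun t _ => ?_)
        exact lintegral_add_right_eq_self (fun y => ENNReal.ofReal (‖gradient u y‖ ^ 2)) (t • h)
    _ = ENNReal.ofReal (‖h‖ ^ 2) * ∫⁻ x, ENNReal.ofReal (‖gradient u x‖ ^ 2) := by
        rw [setLIntegral_const]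
        simp [Real.volume_Icc]

theorem avg_bound (u : E3 → ℝ) (hu : Differentiable ℝ u) {A : Set E3} (hA : MeasurableSet A)
    {r : ℝ} (hr : 0 < r) :
    ∫⁻ x in A, ENNReal.ofReal (u x ^ 2) ≤
      2 * ENNReal.ofReal (r ^ 2) * (∫⁻ x, ENNReal.ofReal (‖gradient u x‖ ^ 2)) +
      2 * (volume A * (volume (Metric.ball (0:E3) r))⁻¹) *
        ∫⁻ x, ENNReal.ofReal (u x ^ 2) := by
  set B : Set E3 := Metric.ball (0:E3) r with hB
  set vB : ENNReal := volume B with hvB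
  have hvB0 : vB ≠ 0 := (Metric.measure_ball_pos volume 0 hr).ne'
  have hvBt : vB ≠ ⊤ := measure_ball_lt_top.ne
  set m : ℝ := vB.toReal with hm'
  have hm : 0 < m := ENNReal.toReal_pos hvB0 hvBt
  have hmB : ENNReal.ofReal m = vB := ENNReal.ofReal_toReal hvBt
  have hminv : ENNReal.ofReal m⁻¹ = vB⁻¹ := by
    rw [ENNReal.ofReal_inv_of_pos hm, hmB]
  have hucont : Continuous u := hu.continuous
  set G : ENNReal := ∫⁻ x, ENNReal.ofReal (‖gradient u x‖ ^ 2) with hG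
  set U : ENNReal := ∫⁻ x, ENNReal.ofReal (u x ^ 2) with hU
  set D : E3 → ENNReal := fun x => ∫⁻ h in B, ENNReal.ofReal ((u (x + h) - u x) ^ 2) with hD
  -- pointwise bound
  have hpt : ∀ x : E3, ENNReal.ofReal (u x ^ 2) ≤ 2 * vB⁻¹ * D x + 2 * vB⁻¹ * U := by
    intro x
    have hcont1 : Continuous fun h : E3 => u (x + h) :=
      hucont.comp (continuous_const.add continuous_id)
    have hint1 : IntegrableOn (fun h : E3 => u (x + h)) B := by
      exact (hcont1.continuousOn.integrableOn_compact (isCompact_closedBall 0 r)).mono_set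
        Metric.ball_subset_closedBall
    have hint2 : IntegrableOn (fun h : E3 => |u x - u (x + h)|) B := by
      have : Continuous fun h : E3 => |u x - u (x + h)| :=
        (continuous_const.sub hcont1).abs
      exact (this.continuousOn.integrableOn_compact (isCompact_closedBall 0 r)).mono_set
        Metric.ball_subset_closedBall
    have hint1' : IntegrableOn (fun h : E3 => |u (x + h)|) B := hint1.abs
    set a : ℝ := m⁻¹ * ∫ h in B, (u x - u (x + h)) with ha
    set b : ℝ := m⁻¹ * ∫ h in B, u (x + h) with hb
    have hid : u x = a + b := by
      have hintc : IntegrableOn (fun _ : E3 => u x) B :=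
        integrableOn_const hvBt
      have h1 : ∫ h in B, (u x - u (x + h)) = m * u x - ∫ h in B, u (x + h) := by
        rw [integral_sub hintc hint1, setIntegral_const]
        simp [hm', smul_eq_mul, mul_comm, Measure.real, hvB]
      rw [ha, hb, h1]
      field_simp
      ring
    have hsq : u x ^ 2 ≤ 2 * a ^ 2 + 2 * b ^ 2 := by
      rw [hid]; nlinarith [sq_nonneg (a - b)]
    have haCS : ENNReal.ofReal (a ^ 2) ≤ vB⁻¹ * D x := by
      have habs : |a| ≤ m⁻¹ * ∫ h in B, |u x - u (x + h)| := by
        rw [ha, abs_mul, abs_of_nonneg (inv_nonneg.2 hm.le)]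
        gcongr
        simpa [Real.norm_eq_abs] using
          norm_integral_le_integral_norm (μ := volume.restrict B) (fun h => u x - u (x + h))
      have hCS := CS_aux (volume.restrict B) (fun h => |u x - u (x + h)|)
        ((continuous_const.sub hcont1).abs.measurable.aemeasurable) hint2
        (Filter.Eventually.of_forall fun h => abs_nonneg _)
      rw [Measure.restrict_apply_univ] at hCS
      calc ENNReal.ofReal (a ^ 2)
          ≤ ENNReal.ofReal ((m⁻¹ * ∫ h in B, |u x - u (x + h)|) ^ 2) := by
            apply ENNReal.ofReal_le_ofReal
            rw [← sq_abs a]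
            have h2 : (0:ℝ) ≤ m⁻¹ * ∫ h in B, |u x - u (x + h)| :=
              le_trans (abs_nonneg a) habs
            nlinarith [abs_nonneg a]
        _ = ENNReal.ofReal (m⁻¹) ^ 2 * ENNReal.ofReal (∫ h in B, |u x - u (x + h)|) ^ 2 := by
            rw [mul_pow, ENNReal.ofReal_mul (by positivity), ENNReal.ofReal_pow (by positivity),
              ENNReal.ofReal_pow (integral_nonneg fun h => abs_nonneg _)]
        _ ≤ vB⁻¹ ^ 2 * (vB * ∫⁻ h in B, ENNReal.ofReal (|u x - u (x + h)|) ^ 2) := by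
            rw [hminv]; exact mul_le_mul_right hCS _
        _ = vB⁻¹ * D x := by
            rw [hD]
            simp only []
            rw [sq, mul_assoc, ← mul_assoc vB⁻¹ vB _, ENNReal.inv_mul_cancel hvB0 hvBt, one_mul]
            congr 1
            refine lintegral_congr fun h => ?_
            rw [← ENNReal.ofReal_pow (abs_nonneg _), sq_abs]
            congr 1
            ring_nf
    have hbCS : ENNReal.ofReal (b ^ 2) ≤ vB⁻¹ * U := by
      have habs : |b| ≤ m⁻¹ * ∫ h in B, |u (x + h)| := by
        rw [hb, abs_mul, abs_of_nonneg (inv_nonneg.2 hm.le)]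
        gcongr
        simpa [Real.norm_eq_abs] using
          norm_integral_le_integral_norm (μ := volume.restrict B) (fun h => u (x + h))
      have hCS := CS_aux (volume.restrict B) (fun h => |u (x + h)|)
        (hcont1.abs.measurable.aemeasurable) hint1'
        (Filter.Eventually.of_forall fun h => abs_nonneg _)
      rw [Measure.restrict_apply_univ] at hCS
      have htrans : ∫⁻ h in B, ENNReal.ofReal (|u (x + h)|) ^ 2 ≤ U := by
        calc ∫⁻ h in B, ENNReal.ofReal (|u (x + h)|) ^ 2
            ≤ ∫⁻ h, ENNReal.ofReal (|u (x + h)|) ^ 2 := setLIntegral_le_lintegral _ _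
          _ = ∫⁻ h, ENNReal.ofReal (u (x + h) ^ 2) := by
              refine lintegral_congr fun h => ?_
              rw [← ENNReal.ofReal_pow (abs_nonneg _), sq_abs]
          _ = U := lintegral_add_left_eq_self (fun y => ENNReal.ofReal (u y ^ 2)) x
      calc ENNReal.ofReal (b ^ 2)
          ≤ ENNReal.ofReal ((m⁻¹ * ∫ h in B, |u (x + h)|) ^ 2) := by
            apply ENNReal.ofReal_le_ofReal
            rw [← sq_abs b]
            have h2 : (0:ℝ) ≤ m⁻¹ * ∫ h in B, |u (x + h)| := le_trans (abs_nonneg b) habs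
            nlinarith [abs_nonneg b]
        _ = ENNReal.ofReal (m⁻¹) ^ 2 * ENNReal.ofReal (∫ h in B, |u (x + h)|) ^ 2 := by
            rw [mul_pow, ENNReal.ofReal_mul (by positivity), ENNReal.ofReal_pow (by positivity),
              ENNReal.ofReal_pow (integral_nonneg fun h => abs_nonneg _)]
        _ ≤ vB⁻¹ ^ 2 * (vB * ∫⁻ h in B, ENNReal.ofReal (|u (x + h)|) ^ 2) := by
            rw [hminv]; exact mul_le_mul_right hCS _
        _ ≤ vB⁻¹ * U := by
            rw [sq, mul_assoc, ← mul_assoc vB⁻¹ vB _, ENNReal.inv_mul_cancel hvB0 hvBt, one_mul]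
            exact mul_le_mul_right htrans _
    calc ENNReal.ofReal (u x ^ 2)
        ≤ ENNReal.ofReal (2 * a ^ 2 + 2 * b ^ 2) := ENNReal.ofReal_le_ofReal hsq
      _ = 2 * ENNReal.ofReal (a ^ 2) + 2 * ENNReal.ofReal (b ^ 2) := by
          rw [ENNReal.ofReal_add (by positivity) (by positivity),
            ENNReal.ofReal_mul (by norm_num), ENNReal.ofReal_mul (by norm_num)]
          norm_num
      _ ≤ 2 * (vB⁻¹ * D x) + 2 * (vB⁻¹ * U) := by gcongr
      _ = 2 * vB⁻¹ * D x + 2 * vB⁻¹ * U := by ring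
  -- integrate over A
  have hDmeas : Measurable fun p : E3 × E3 => ENNReal.ofReal ((u (p.1 + p.2) - u p.1) ^ 2) := by
    have : Continuous fun p : E3 × E3 => (u (p.1 + p.2) - u p.1) ^ 2 :=
      ((hucont.comp (continuous_fst.add continuous_snd)).sub
        (hucont.comp continuous_fst)).pow 2
    exact this.measurable.ennreal_ofReal
  have hswap : ∫⁻ x, D x ≤ ENNReal.ofReal (r ^ 2) * G * vB := by
    calc ∫⁻ x, D x = ∫⁻ h in B, ∫⁻ x, ENNReal.ofReal ((u (x + h) - u x) ^ 2) := by
          exact lintegral_lintegral_swap hDmeas.aemeasurable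
      _ ≤ ∫⁻ h in B, ENNReal.ofReal (r ^ 2) * G := by
          refine setLIntegral_mono' measurableSet_ball fun h hh => ?_
          refine le_trans (translation_bound u hu h) ?_
          have hhr : ‖h‖ ≤ r := by
            rw [← dist_zero_right]
            exact (Metric.mem_ball.mp hh).le
          exact mul_le_mul_left
            (ENNReal.ofReal_le_ofReal (pow_le_pow_left₀ (norm_nonneg _) hhr 2)) G
      _ = ENNReal.ofReal (r ^ 2) * G * vB := by rw [setLIntegral_const]
  have hDm : Measurable D := by
    have := hDmeas.lintegral_prod_right' (ν := volume.restrict B)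
    exact this
  have hc_ne_top : (2 : ENNReal) * vB⁻¹ ≠ ⊤ :=
    ENNReal.mul_ne_top (by norm_num) (ENNReal.inv_ne_top.2 hvB0)
  calc ∫⁻ x in A, ENNReal.ofReal (u x ^ 2)
      ≤ ∫⁻ x in A, (2 * vB⁻¹ * D x + 2 * vB⁻¹ * U) :=
        lintegral_mono fun x => hpt x
    _ = (∫⁻ x in A, 2 * vB⁻¹ * D x) + ∫⁻ x in A, 2 * vB⁻¹ * U :=
        lintegral_add_left' ((hDm.const_mul _).aemeasurable) _
    _ ≤ 2 * vB⁻¹ * (ENNReal.ofReal (r ^ 2) * G * vB) + 2 * vB⁻¹ * U * volume A := by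
        gcongr
        · calc ∫⁻ x in A, 2 * vB⁻¹ * D x ≤ ∫⁻ x, 2 * vB⁻¹ * D x :=
              setLIntegral_le_lintegral _ _
            _ = 2 * vB⁻¹ * ∫⁻ x, D x := lintegral_const_mul' _ _ hc_ne_top
            _ ≤ 2 * vB⁻¹ * (ENNReal.ofReal (r ^ 2) * G * vB) := mul_le_mul_right hswap _
        · rw [setLIntegral_const]
    _ = 2 * ENNReal.ofReal (r ^ 2) * G + 2 * (volume A * vB⁻¹) * U := by
        have h1 : (2:ENNReal) * vB⁻¹ * (ENNReal.ofReal (r ^ 2) * G * vB) =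
            2 * ENNReal.ofReal (r ^ 2) * G * (vB⁻¹ * vB) := by ring
        rw [h1, ENNReal.inv_mul_cancel hvB0 hvBt, mul_one]
        ring

theorem stmt_11 (V : E3 → ℝ) (hVmeas : Measurable V) (hV0 : ∀ x, 0 ≤ V x)
    (M₀ : ℝ) (hM₀ : 0 < M₀) (hA : volume {x : E3 | V x ≤ M₀} < ⊤) :
    ∃ κ : ℝ, 0 < κ ∧ ∀ lam : ℝ, 1 ≤ lam → ∀ u : E3 → ℝ,
      Differentiable ℝ u →
      MemLp u 2 volume →
      MemLp (fun x => ‖gradient u x‖) 2 volume →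
      Integrable (fun x => V x * (u x) ^ 2) volume →
      κ * Real.sqrt (∫ x, (‖gradient u x‖ ^ 2 + (u x) ^ 2)) ≤
        Real.sqrt (∫ x, (‖gradient u x‖ ^ 2 + lam * V x * (u x) ^ 2)) := by
  classical
  set A : Set E3 := {x : E3 | V x ≤ M₀} with hAdef
  have hAmeas : MeasurableSet A := hVmeas measurableSet_Iic
  -- choose the radius r
  set v1 : ENNReal := volume (Metric.ball (0:E3) 1) with hv1
  have hv10 : v1 ≠ 0 := (Metric.measure_ball_pos volume 0 one_pos).ne'
  have hv1t : v1 ≠ ⊤ := measure_ball_lt_top.ne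
  have hμA : volume A ≠ ⊤ := hA.ne
  have hqt : 4 * volume A / v1 ≠ ⊤ :=
    (ENNReal.div_lt_top (ENNReal.mul_ne_top (by norm_num) hμA) hv10).ne
  set s : ℝ := (4 * volume A / v1).toReal + 1 with hs
  have hs1 : 1 ≤ s := le_add_of_nonneg_left ENNReal.toReal_nonneg
  have hs0 : 0 < s := lt_of_lt_of_le one_pos hs1
  set r : ℝ := s ^ ((1:ℝ)/3) with hrdef
  have hr : 0 < r := Real.rpow_pos_of_pos hs0 _
  have hr3 : r ^ (3:ℕ) = s := by
    rw [hrdef, ← Real.rpow_natCast (s ^ ((1:ℝ)/3)) 3, ← Real.rpow_mul hs0.le]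
    norm_num
  have hvol : volume A * 4 ≤ volume (Metric.ball (0:E3) r) := by
    rw [Measure.addHaar_ball volume (0:E3) hr.le, finrank_euclideanSpace_fin, hr3]
    have h1 : (4 * volume A / v1) ≤ ENNReal.ofReal s := by
      rw [hs, ENNReal.ofReal_add ENNReal.toReal_nonneg zero_le_one,
        ENNReal.ofReal_toReal hqt]
      simp
    calc volume A * 4 = 4 * volume A := mul_comm _ _
      _ = 4 * volume A / v1 * v1 := (ENNReal.div_mul_cancel hv10 hv1t).symm
      _ ≤ ENNReal.ofReal s * v1 := mul_le_mul_left h1 _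
  set C : ℝ := max (1 + 4 * r ^ 2) (2 * M₀⁻¹) with hCdef
  have hC : 0 < C := lt_of_lt_of_le (by positivity) (le_max_left _ _)
  have hsqrtC : 0 < Real.sqrt C := Real.sqrt_pos.2 hC
  refine ⟨(Real.sqrt C)⁻¹, inv_pos.2 hsqrtC, ?_⟩
  intro lam hlam u hdiff hu2 hg2 hVu
  have hIgint : Integrable (fun x => ‖gradient u x‖ ^ 2) volume := hg2.integrable_sq
  have hIuint : Integrable (fun x => u x ^ 2) volume := hu2.integrable_sq
  set Ig : ℝ := ∫ x, ‖gradient u x‖ ^ 2 with hIg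
  set Iu : ℝ := ∫ x, u x ^ 2 with hIu
  set IV : ℝ := ∫ x, V x * u x ^ 2 with hIV
  have hIg0 : 0 ≤ Ig := integral_nonneg fun x => sq_nonneg _
  have hIu0 : 0 ≤ Iu := integral_nonneg fun x => sq_nonneg _
  have hIV0 : 0 ≤ IV := integral_nonneg fun x => mul_nonneg (hV0 x) (sq_nonneg _)
  have hGe : (∫⁻ x, ENNReal.ofReal (‖gradient u x‖ ^ 2)) = ENNReal.ofReal Ig :=
    (ofReal_integral_eq_lintegral_ofReal hIgint
      (Filter.Eventually.of_forall fun x => sq_nonneg _)).symm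
  have hUe : (∫⁻ x, ENNReal.ofReal (u x ^ 2)) = ENNReal.ofReal Iu :=
    (ofReal_integral_eq_lintegral_ofReal hIuint
      (Filter.Eventually.of_forall fun x => sq_nonneg _)).symm
  -- part on A
  set vB : ENNReal := volume (Metric.ball (0:E3) r) with hvBd
  have hvB0 : vB ≠ 0 := (Metric.measure_ball_pos volume 0 hr).ne'
  have hvBt : vB ≠ ⊤ := measure_ball_lt_top.ne
  have hfrac : volume A * vB⁻¹ ≤ 4⁻¹ := by
    have h1 : volume A ≤ vB / 4 :=
      (ENNReal.le_div_iff_mul_le (Or.inl (by norm_num)) (Or.inl (by norm_num))).2 hvol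
    calc volume A * vB⁻¹ ≤ vB / 4 * vB⁻¹ := mul_le_mul_left h1 _
      _ = vB * vB⁻¹ * 4⁻¹ := by rw [div_eq_mul_inv]; ring
      _ = 4⁻¹ := by rw [ENNReal.mul_inv_cancel hvB0 hvBt, one_mul]
  have hApart : ∫⁻ x in A, ENNReal.ofReal (u x ^ 2) ≤
      ENNReal.ofReal (2 * r ^ 2 * Ig) + ENNReal.ofReal (Iu / 2) := by
    refine le_trans (avg_bound u hdiff hAmeas hr) ?_
    rw [hGe, hUe]
    gcongr
    · rw [ENNReal.ofReal_mul (by positivity), ENNReal.ofReal_mul (by norm_num)]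
      norm_num
    · calc 2 * (volume A * vB⁻¹) * ENNReal.ofReal Iu
          ≤ 2 * 4⁻¹ * ENNReal.ofReal Iu := by gcongr
        _ = ENNReal.ofReal (Iu / 2) := by
            rw [show (2:ENNReal) * 4⁻¹ = 2⁻¹ by
              rw [show (4:ENNReal) = 2*2 by norm_num,
                ENNReal.mul_inv (by norm_num) (by norm_num), ← mul_assoc,
                ENNReal.mul_inv_cancel (by norm_num) (by norm_num), one_mul],
              ENNReal.ofReal_div_of_pos (by norm_num), ENNReal.ofReal_ofNat,
              div_eq_mul_inv, mul_comm]
  -- part on Aᶜ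
  have hVu' : Integrable (fun x => M₀⁻¹ * (V x * u x ^ 2)) volume := hVu.const_mul _
  have hAcpart : ∫⁻ x in Aᶜ, ENNReal.ofReal (u x ^ 2) ≤ ENNReal.ofReal (M₀⁻¹ * IV) := by
    calc ∫⁻ x in Aᶜ, ENNReal.ofReal (u x ^ 2)
        ≤ ∫⁻ x in Aᶜ, ENNReal.ofReal (M₀⁻¹ * (V x * u x ^ 2)) := by
          refine setLIntegral_mono' hAmeas.compl fun x hx => ?_
          apply ENNReal.ofReal_le_ofReal
          have hVx : M₀ ≤ V x := le_of_lt (not_le.mp hx)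
          have h1 : (1:ℝ) ≤ M₀⁻¹ * V x := by
            rw [← inv_mul_cancel₀ hM₀.ne']
            exact mul_le_mul_of_nonneg_left hVx (inv_nonneg.2 hM₀.le)
          calc u x ^ 2 = 1 * u x ^ 2 := (one_mul _).symm
            _ ≤ (M₀⁻¹ * V x) * u x ^ 2 := mul_le_mul_of_nonneg_right h1 (sq_nonneg _)
            _ = M₀⁻¹ * (V x * u x ^ 2) := by ring
      _ ≤ ∫⁻ x, ENNReal.ofReal (M₀⁻¹ * (V x * u x ^ 2)) := setLIntegral_le_lintegral _ _
      _ = ENNReal.ofReal (M₀⁻¹ * IV) := by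
          rw [← ofReal_integral_eq_lintegral_ofReal hVu'
            (Filter.Eventually.of_forall fun x =>
              mul_nonneg (inv_nonneg.2 hM₀.le) (mul_nonneg (hV0 x) (sq_nonneg _)))]
          rw [integral_const_mul]
  -- combine
  have hsplit : ENNReal.ofReal Iu ≤
      ENNReal.ofReal (2 * r ^ 2 * Ig) + ENNReal.ofReal (Iu / 2) +
        ENNReal.ofReal (M₀⁻¹ * IV) := by
    rw [← hUe, ← lintegral_add_compl (fun x => ENNReal.ofReal (u x ^ 2)) hAmeas]
    exact add_le_add hApart hAcpart
  have hreal : Iu ≤ 2 * r ^ 2 * Ig + Iu / 2 + M₀⁻¹ * IV := by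
    have h1 : ENNReal.ofReal Iu ≤
        ENNReal.ofReal (2 * r ^ 2 * Ig + Iu / 2 + M₀⁻¹ * IV) := by
      refine le_trans hsplit ?_
      rw [ENNReal.ofReal_add (by positivity) (by positivity),
        ENNReal.ofReal_add (by positivity) (by positivity)]
    exact (ENNReal.ofReal_le_ofReal_iff (by positivity)).mp h1
  have hkey : Iu ≤ 4 * r ^ 2 * Ig + 2 * M₀⁻¹ * IV := by linarith
  -- final assembly
  have hlamint : Integrable (fun x => lam * V x * u x ^ 2) volume := by
    simpa [mul_assoc] using hVu.const_mul lam
  have hS : (∫ x, (‖gradient u x‖ ^ 2 + u x ^ 2)) = Ig + Iu :=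
    integral_add hIgint hIuint
  have hT : (∫ x, (‖gradient u x‖ ^ 2 + lam * V x * u x ^ 2)) = Ig + lam * IV := by
    rw [integral_add hIgint hlamint]
    congr 1
    simp_rw [mul_assoc]
    exact integral_const_mul lam _
  have hlamIV : IV ≤ lam * IV := le_mul_of_one_le_left hIV0 hlam
  have hlamIV0 : 0 ≤ lam * IV := mul_nonneg (by linarith) hIV0
  have hSC : Ig + Iu ≤ C * (Ig + lam * IV) := by
    have h2 : (1 + 4 * r ^ 2) * Ig ≤ C * Ig :=
      mul_le_mul_of_nonneg_right (le_max_left _ _) hIg0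
    have h3 : 2 * M₀⁻¹ * IV ≤ C * IV :=
      mul_le_mul_of_nonneg_right (le_max_right _ _) hIV0
    have h4 : C * IV ≤ C * (lam * IV) := mul_le_mul_of_nonneg_left hlamIV hC.le
    have h5 : C * (Ig + lam * IV) = C * Ig + C * (lam * IV) := by ring
    nlinarith
  rw [hS, hT]
  have hsq : Real.sqrt (Ig + Iu) ≤ Real.sqrt C * Real.sqrt (Ig + lam * IV) := by
    rw [← Real.sqrt_mul hC.le]
    exact Real.sqrt_le_sqrt hSC
  calc (Real.sqrt C)⁻¹ * Real.sqrt (Ig + Iu)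
      ≤ (Real.sqrt C)⁻¹ * (Real.sqrt C * Real.sqrt (Ig + lam * IV)) := by
        exact mul_le_mul_of_nonneg_left hsq (inv_nonneg.2 hsqrtC.le)
    _ = Real.sqrt (Ig + lam * IV) := by
        rw [← mul_assoc, inv_mul_cancel₀ hsqrtC.ne', one_mul]
end

section
/- Let H be a Hilbert space and I ∈ C¹(H, ℝ) be of the form I(u) = ½‖u‖² + ¼F(u) - (μ/p)P(u) - (1/6)Q(u) with F, P, Q ≥ 0, t-homogeneous of degrees 4, p, 6 respectively (4 < p < 6), and P, Q not identically zero near any ray. Define N = {u ≠ 0 : ⟨I'(u), u⟩ = 0}, c = inf_N I, c* = inf_{u≠0} max_{t≥0} I(tu), and c** = inf_{γ ∈ Γ} sup_{t∈[0,1]} I(γ(t)) where Γ = {γ ∈ C([0,1], H) : γ(0) = 0, I(γ(1)) < 0}. Assume additionally: (i) for each u ≠ 0 there is a unique t(u) > 0 with t(u)u ∈ N and I(t(u)u) = max_{t≥0} I(tu); (ii) for u with ‖u‖ small, ‖u‖² + F(u) > μP(u) + Q(u). Then c = c* = c**. -/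
open Set Filter

set_option maxHeartbeats 1000000 in
theorem stmt_13 {H : Type*} [NormedAddCommGroup H] [InnerProductSpace ℝ H] [CompleteSpace H]
    (p μ : ℝ) (hp4 : 4 < p) (hp6 : p < 6) (hμ : 0 < μ)
    (I F P Q : H → ℝ) (hC1 : ContDiff ℝ 1 I)
    (hI : ∀ u, I u = 1 / 2 * ‖u‖ ^ 2 + 1 / 4 * F u - μ / p * P u - 1 / 6 * Q u)
    (hF0 : ∀ u, 0 ≤ F u) (hP0 : ∀ u, 0 ≤ P u) (hQ0 : ∀ u, 0 ≤ Q u)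
    (hFh : ∀ t : ℝ, 0 ≤ t → ∀ u, F (t • u) = t ^ 4 * F u)
    (hPh : ∀ t : ℝ, 0 ≤ t → ∀ u, P (t • u) = t ^ p * P u)
    (hQh : ∀ t : ℝ, 0 ≤ t → ∀ u, Q (t • u) = t ^ 6 * Q u)
    (hnz : ∀ u : H, u ≠ 0 → 0 < P u ∨ 0 < Q u)
    (N : Set H) (hN : N = {u : H | u ≠ 0 ∧ fderiv ℝ I u u = 0})
    (hproj : ∀ u : H, u ≠ 0 → ∃! t : ℝ, 0 < t ∧ t • u ∈ N ∧
        ∀ s : ℝ, 0 ≤ s → I (s • u) ≤ I (t • u))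
    (hsmall : ∃ ρ : ℝ, 0 < ρ ∧ ∀ u : H, u ≠ 0 → ‖u‖ < ρ →
        μ * P u + Q u < ‖u‖ ^ 2 + F u) :
    sInf (I '' N)
      = sInf {y : ℝ | ∃ u : H, u ≠ 0 ∧
          y = sSup ((fun t : ℝ => I (t • u)) '' Set.Ici (0 : ℝ))} ∧
    sInf (I '' N)
      = sInf {y : ℝ | ∃ γ : ℝ → H, ContinuousOn γ (Set.Icc 0 1) ∧ γ 0 = 0 ∧ I (γ 1) < 0 ∧
          y = sSup ((fun t => I (γ t)) '' Set.Icc (0 : ℝ) 1)} := by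
  have hp0 : (0:ℝ) < p := by linarith
  -- basic values at 0
  have hF00 : F 0 = 0 := by
    have := hFh 0 le_rfl 0
    simpa using this
  have hP00 : P 0 = 0 := by
    have := hPh 0 le_rfl 0
    rw [Real.zero_rpow (ne_of_gt hp0)] at this
    simpa using this
  have hQ00 : Q 0 = 0 := by
    have := hQh 0 le_rfl 0
    simpa using this
  have hI00 : I 0 = 0 := by
    rw [hI]; simp [hF00, hP00, hQ00]
  -- the function E
  set E : H → ℝ := fun w => ‖w‖ ^ 2 + F w - μ * P w - Q w with hEdef
  have hE0 : E 0 = 0 := by simp [hEdef, hF00, hP00, hQ00]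
  -- fiber formula
  have hfib : ∀ t : ℝ, 0 ≤ t → ∀ u : H,
      I (t • u) = t ^ 2 * (1 / 2 * ‖u‖ ^ 2) + t ^ 4 * (1 / 4 * F u)
        - t ^ p * (μ / p * P u) - t ^ 6 * (1 / 6 * Q u) := by
    intro t ht u
    rw [hI, hFh t ht, hPh t ht, hQh t ht, norm_smul]
    rw [Real.norm_eq_abs, abs_of_nonneg ht, mul_pow]
    ring
  -- derivative identity : fderiv I w w = E w
  have hderiv : ∀ w : H, fderiv ℝ I w w = E w := by
    intro w
    have hd : HasFDerivAt I (fderiv ℝ I w) ((1:ℝ) • w) := by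
      rw [one_smul]
      exact ((hC1.differentiable one_ne_zero) w).hasFDerivAt
    have hs : HasDerivAt (fun s : ℝ => s • w) w 1 := by
      simpa using (hasDerivAt_id (1:ℝ)).smul_const w
    have h1 : HasDerivAt (fun s : ℝ => I (s • w)) (fderiv ℝ I w w) 1 := by
      have := hd.comp_hasDerivAt 1 hs
      exact this
    -- the polynomial model
    have h2 : HasDerivAt (fun s : ℝ => s ^ 2 * (1 / 2 * ‖w‖ ^ 2) + s ^ 4 * (1 / 4 * F w)
        - s ^ p * (μ / p * P w) - s ^ 6 * (1 / 6 * Q w))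
        (2 * (1 / 2 * ‖w‖ ^ 2) + 4 * (1 / 4 * F w) - p * (μ / p * P w) - 6 * (1 / 6 * Q w)) 1 := by
      have hpow2 : HasDerivAt (fun s : ℝ => s ^ 2) (2 : ℝ) 1 := by
        simpa using hasDerivAt_pow 2 (1:ℝ)
      have hpow4 : HasDerivAt (fun s : ℝ => s ^ 4) (4 : ℝ) 1 := by
        simpa using hasDerivAt_pow 4 (1:ℝ)
      have hpow6 : HasDerivAt (fun s : ℝ => s ^ 6) (6 : ℝ) 1 := by
        simpa using hasDerivAt_pow 6 (1:ℝ)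
      have hpowp : HasDerivAt (fun s : ℝ => s ^ p) (p : ℝ) 1 := by
        have := Real.hasDerivAt_rpow_const (x := (1:ℝ)) (p := p) (Or.inl one_ne_zero)
        simpa using this
      exact (((hpow2.mul_const _).add (hpow4.mul_const _)).sub (hpowp.mul_const _)).sub
        (hpow6.mul_const _)
    have heq : (fun s : ℝ => I (s • w)) =ᶠ[nhds (1:ℝ)]
        (fun s : ℝ => s ^ 2 * (1 / 2 * ‖w‖ ^ 2) + s ^ 4 * (1 / 4 * F w)
          - s ^ p * (μ / p * P w) - s ^ 6 * (1 / 6 * Q w)) := by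
      filter_upwards [Ioi_mem_nhds (show (0:ℝ) < 1 by norm_num)] with s hs
      exact hfib s (le_of_lt hs) w
    have h2' : HasDerivAt (fun s : ℝ => I (s • w))
        (2 * (1 / 2 * ‖w‖ ^ 2) + 4 * (1 / 4 * F w) - p * (μ / p * P w) - 6 * (1 / 6 * Q w)) 1 :=
      h2.congr_of_eventuallyEq heq
    have := h1.unique h2'
    rw [this, hEdef]
    field_simp
  -- characterization of N
  have hNc : ∀ w : H, w ∈ N ↔ w ≠ 0 ∧ E w = 0 := by
    intro w
    rw [hN]
    simp only [Set.mem_setOf_eq, hderiv]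
  -- continuity of E
  have hEcont : Continuous E := by
    have h1 : Continuous fun w : H => fderiv ℝ I w w :=
      (hC1.continuous_fderiv one_ne_zero).clm_apply continuous_id
    have : E = fun w : H => fderiv ℝ I w w := by
      funext w; rw [hderiv w]
    rw [this]; exact h1
  -- positivity:  E u ≥ 0 → I u ≥ ‖u‖²/4
  have hpos : ∀ u : H, 0 ≤ E u → 1 / 4 * ‖u‖ ^ 2 ≤ I u := by
    intro u hE
    rw [hI]
    have h1 : μ / p * P u ≤ μ / 4 * P u := by
      apply mul_le_mul_of_nonneg_right _ (hP0 u)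
      apply div_le_div_of_nonneg_left (le_of_lt hμ) (by norm_num) (by linarith)
    have h2 : 1 / 6 * Q u ≤ 1 / 4 * Q u := by nlinarith [hQ0 u]
    have h3 : μ * P u + Q u ≤ ‖u‖ ^ 2 + F u := by
      rw [hEdef] at hE; simp only at hE; linarith
    nlinarith [hF0 u, hP0 u, hQ0 u]
  -- I nonneg on N
  have hIN0 : ∀ v ∈ N, 0 ≤ I v := by
    intro v hv
    obtain ⟨hv0, hvE⟩ := (hNc v).mp hv
    have := hpos v (le_of_eq hvE.symm)
    nlinarith [sq_nonneg ‖v‖]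
  have hbddN : BddBelow (I '' N) := by
    refine ⟨0, fun y hy => ?_⟩
    obtain ⟨v, hv, rfl⟩ := hy
    exact hIN0 v hv
  -- uniqueness of the Nehari time on each ray
  have hODE : ∀ u : H, u ≠ 0 → ∀ t s : ℝ, 0 < t → 0 < s →
      E (t • u) = 0 → E (s • u) = 0 → t = s := by
    intro u hu t s ht hs hEt hEs
    have ha : 0 < ‖u‖ ^ 2 := by
      have := norm_pos_iff.mpr hu
      positivity
    -- the fiber form of E
    have hEfib : ∀ r : ℝ, 0 < r → E (r • u) =
        r ^ 2 * ‖u‖ ^ 2 + r ^ 4 * F u - r ^ 4 * r ^ (p - 4) * (μ * P u) - r ^ 6 * Q u := by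
      intro r hr
      have hrp : r ^ p = r ^ (4:ℕ) * r ^ (p - 4) := by
        rw [← Real.rpow_natCast r 4, ← Real.rpow_add hr]
        norm_num
      rw [hEdef]
      simp only
      rw [hFh r (le_of_lt hr), hPh r (le_of_lt hr), hQh r (le_of_lt hr), norm_smul,
        Real.norm_eq_abs, abs_of_nonneg (le_of_lt hr), mul_pow, hrp]
      push_cast
      ring
    rw [hEfib t ht] at hEt
    rw [hEfib s hs] at hEs
    have main : ∀ t s : ℝ, 0 < t → 0 < s → t < s →
        t ^ 2 * ‖u‖ ^ 2 + t ^ 4 * F u - t ^ 4 * t ^ (p - 4) * (μ * P u) - t ^ 6 * Q u = 0 →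
        s ^ 2 * ‖u‖ ^ 2 + s ^ 4 * F u - s ^ 4 * s ^ (p - 4) * (μ * P u) - s ^ 6 * Q u = 0 →
        False := by
      intro t s ht hs hts eq1 eq2
      have hX : t ^ (p - 4) < s ^ (p - 4) :=
        Real.rpow_lt_rpow (le_of_lt ht) hts (by linarith)
      have hkey : ‖u‖ ^ 2 * (t ^ 2 * s ^ 2 * (s ^ 2 - t ^ 2))
          + μ * P u * (t ^ 4 * s ^ 4 * (s ^ (p - 4) - t ^ (p - 4)))
          + Q u * (t ^ 4 * s ^ 4 * (s ^ 2 - t ^ 2)) = 0 := by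
        linear_combination s ^ 4 * eq1 - t ^ 4 * eq2
      have h0 : 0 < s ^ 2 - t ^ 2 := by nlinarith
      have h1 : 0 < t ^ 2 * s ^ 2 * (s ^ 2 - t ^ 2) := by positivity
      have h1' : 0 < t ^ 4 * s ^ 4 * (s ^ 2 - t ^ 2) := by positivity
      have h2 : 0 ≤ s ^ (p - 4) - t ^ (p - 4) := by linarith
      have h3 : 0 ≤ t ^ 4 * s ^ 4 * (s ^ (p - 4) - t ^ (p - 4)) := by positivity
      rcases hnz u hu with hc | hd
      · have h4 : 0 < t ^ 4 * s ^ 4 * (s ^ (p - 4) - t ^ (p - 4)) := by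
          have h0 : 0 < s ^ (p - 4) - t ^ (p - 4) := by linarith
          positivity
        linarith [mul_pos ha h1, mul_pos (mul_pos hμ hc) h4,
          mul_nonneg (hQ0 u) (le_of_lt h1')]
      · linarith [mul_pos ha h1, mul_nonneg (mul_nonneg (le_of_lt hμ) (hP0 u)) h3,
          mul_pos hd h1']
    by_contra hne
    rcases lt_or_gt_of_ne hne with hts | hts
    · exact main t s ht hs hts hEt hEs
    · exact main s t hs ht hts hEs hEt
  -- every Nehari point is the fiber maximum on its ray
  have hfibmax : ∀ v ∈ N, ∀ s : ℝ, 0 ≤ s → I (s • v) ≤ I v := by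
    intro v hv s hs
    obtain ⟨hv0, hvE⟩ := (hNc v).mp hv
    obtain ⟨t, ⟨ht, htN, hmax⟩, -⟩ := hproj v hv0
    obtain ⟨-, htE⟩ := (hNc (t • v)).mp htN
    have ht1 : t = 1 := hODE v hv0 t 1 ht one_pos htE (by rw [one_smul]; exact hvE)
    have := hmax s hs
    rw [ht1, one_smul] at this
    exact this
  -- First equality: the set of fiber maxima equals I '' N
  have hSstar : {y : ℝ | ∃ u : H, u ≠ 0 ∧
      y = sSup ((fun t : ℝ => I (t • u)) '' Set.Ici (0 : ℝ))} = I '' N := by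
    ext y
    constructor
    · rintro ⟨u, hu0, rfl⟩
      obtain ⟨t, ⟨ht, htN, hmax⟩, -⟩ := hproj u hu0
      refine ⟨t • u, htN, ?_⟩
      have hub : ∀ x ∈ (fun t : ℝ => I (t • u)) '' Set.Ici (0 : ℝ), x ≤ I (t • u) := by
        rintro x ⟨s, hs, rfl⟩
        exact hmax s hs
      have hmem : I (t • u) ∈ (fun t : ℝ => I (t • u)) '' Set.Ici (0 : ℝ) :=
        ⟨t, le_of_lt ht, rfl⟩
      exact le_antisymm (le_csSup ⟨I (t • u), hub⟩ hmem) (csSup_le ⟨_, hmem⟩ hub)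
    · rintro ⟨v, hv, rfl⟩
      have hv0 : v ≠ 0 := ((hNc v).mp hv).1
      refine ⟨v, hv0, ?_⟩
      have hub : ∀ x ∈ (fun t : ℝ => I (t • v)) '' Set.Ici (0 : ℝ), x ≤ I v := by
        rintro x ⟨s, hs, rfl⟩
        exact hfibmax v hv s hs
      have hmem : I v ∈ (fun t : ℝ => I (t • v)) '' Set.Ici (0 : ℝ) :=
        ⟨1, Set.mem_Ici.mpr zero_le_one, by simp⟩
      exact le_antisymm (le_csSup ⟨I v, hub⟩ hmem) (csSup_le ⟨_, hmem⟩ hub)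
  -- two elementary real inequalities
  have habs1 : ∀ a b c q r x : ℝ, 0 ≤ a → 0 ≤ q → 1 ≤ r → a + b + 1 < c * x →
      r ^ 2 * a + r ^ 4 * b - r ^ 4 * x * c - r ^ 6 * q < 0 := by
    intro a b c q r x ha hq hr1 h
    have hr0 : (0:ℝ) < r := lt_of_lt_of_le one_pos hr1
    nlinarith [mul_lt_mul_of_pos_left h (pow_pos hr0 4),
      mul_le_mul_of_nonneg_right (pow_le_pow_right₀ hr1 (by norm_num : 2 ≤ 4)) ha,
      mul_nonneg (pow_nonneg (le_of_lt hr0) 6) hq, pow_pos hr0 4]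
  have habs2 : ∀ a b w qv r : ℝ, 0 ≤ a → 0 ≤ w → 1 ≤ r → a + b + 1 < qv / 6 * r ^ 2 →
      r ^ 2 * a + r ^ 4 * b - w - r ^ 6 * (1 / 6 * qv) < 0 := by
    intro a b w qv r ha hw hr1 h
    have hr0 : (0:ℝ) < r := lt_of_lt_of_le one_pos hr1
    nlinarith [mul_lt_mul_of_pos_left h (pow_pos hr0 4),
      mul_le_mul_of_nonneg_right (pow_le_pow_right₀ hr1 (by norm_num : 2 ≤ 4)) ha,
      pow_pos hr0 4]
  -- existence of a point with negative energy on each ray through a Nehari point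
  have hRex : ∀ v : H, v ≠ 0 → ∃ R : ℝ, 1 ≤ R ∧ I (R • v) < 0 := by
    intro v hv0
    rcases hnz v hv0 with hc | hd
    · -- P v > 0 : the rpow term dominates
      set K : ℝ := p * (1 / 2 * ‖v‖ ^ 2 + 1 / 4 * F v + 1) / (μ * P v) with hK
      obtain ⟨R, hRK, hR1⟩ := (((tendsto_rpow_atTop
          (show (0:ℝ) < p - 4 by linarith)).eventually_gt_atTop K).and
          (eventually_ge_atTop (1:ℝ))).exists
      have hR0 : (0:ℝ) < R := lt_of_lt_of_le one_pos hR1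
      refine ⟨R, hR1, ?_⟩
      rw [hfib R (le_of_lt hR0) v]
      have hrp : R ^ p = R ^ (4:ℕ) * R ^ (p - 4) := by
        rw [← Real.rpow_natCast R 4, ← Real.rpow_add hR0]
        norm_num
      rw [hrp]
      have hKval : μ / p * P v * K = 1 / 2 * ‖v‖ ^ 2 + 1 / 4 * F v + 1 := by
        rw [hK]; field_simp
      have hstep : (1 / 2 * ‖v‖ ^ 2 + 1 / 4 * F v + 1) < μ / p * P v * R ^ (p - 4) := by
        rw [← hKval]
        have hpc : 0 < μ / p * P v := by positivity
        exact (mul_lt_mul_iff_right₀ hpc).mpr hRK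
      exact habs1 (1 / 2 * ‖v‖ ^ 2) (1 / 4 * F v) (μ / p * P v) (1 / 6 * Q v) R (R ^ (p - 4))
        (by positivity) (by linarith [hQ0 v]) hR1 (by linarith [hstep])
    · -- Q v > 0 : the sixth power dominates
      set X : ℝ := 6 * (1 / 2 * ‖v‖ ^ 2 + 1 / 4 * F v + 1) / Q v with hX
      have hXnn : 0 ≤ X := by
        have h1 : 0 ≤ 1 / 2 * ‖v‖ ^ 2 + 1 / 4 * F v + 1 := by nlinarith [hF0 v, sq_nonneg ‖v‖]
        positivity
      set R : ℝ := max 1 (Real.sqrt X + 1) with hRdef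
      have hR1 : (1:ℝ) ≤ R := le_max_left _ _
      have hR0 : (0:ℝ) < R := lt_of_lt_of_le one_pos hR1
      refine ⟨R, hR1, ?_⟩
      have hsX : Real.sqrt X < R :=
        lt_of_lt_of_le (lt_add_one _) (le_max_right _ _)
      have hXR : X < R ^ 2 := by
        calc X = Real.sqrt X ^ 2 := (Real.sq_sqrt hXnn).symm
        _ < R ^ 2 := by
            apply pow_lt_pow_left₀ hsX (Real.sqrt_nonneg X)
            norm_num
      have hXval : Q v / 6 * X = 1 / 2 * ‖v‖ ^ 2 + 1 / 4 * F v + 1 := by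
        rw [hX]; field_simp
      have hstep : 1 / 2 * ‖v‖ ^ 2 + 1 / 4 * F v + 1 < Q v / 6 * R ^ 2 := by
        rw [← hXval]
        exact (mul_lt_mul_iff_right₀ (by positivity)).mpr hXR
      rw [hfib R (le_of_lt hR0) v]
      have hPp : 0 ≤ R ^ p * (μ / p * P v) := by
        have h1 : 0 ≤ R ^ p := Real.rpow_nonneg (le_of_lt hR0) p
        have h2 := hP0 v
        positivity
      exact habs2 (1 / 2 * ‖v‖ ^ 2) (1 / 4 * F v) (R ^ p * (μ / p * P v)) (Q v) R
        (by positivity) hPp hR1 hstep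
  -- every admissible path crosses N
  have hcross : ∀ γ : ℝ → H, ContinuousOn γ (Set.Icc 0 1) → γ 0 = 0 → I (γ 1) < 0 →
      ∃ t ∈ Set.Icc (0:ℝ) 1, γ t ∈ N := by
    intro γ hγ hγ0 hγ1
    obtain ⟨ρ, hρ, hsm⟩ := hsmall
    set cl : ℝ → ℝ := fun t => max 0 (min 1 t) with hcl
    have hclcont : Continuous cl := by
      apply Continuous.max continuous_const
      exact Continuous.min continuous_const continuous_id
    have hclmem : ∀ t, cl t ∈ Set.Icc (0:ℝ) 1 := by
      intro t
      exact ⟨le_max_left _ _, max_le zero_le_one (min_le_left _ _)⟩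
    have hcleq : ∀ t ∈ Set.Icc (0:ℝ) 1, cl t = t := by
      rintro t ⟨h0, h1⟩
      rw [hcl]
      simp only
      rw [min_eq_right h1, max_eq_right h0]
    set γ' : ℝ → H := fun t => γ (cl t) with hγ'
    have hγ'cont : Continuous γ' := hγ.comp_continuous hclcont hclmem
    set g : ℝ → ℝ := fun t => E (γ' t) with hg
    have hgcont : Continuous g := hEcont.comp hγ'cont
    have hγ'eq : ∀ t ∈ Set.Icc (0:ℝ) 1, γ' t = γ t := by
      intro t ht
      show γ (cl t) = γ t
      rw [hcleq t ht]
    have hg1 : g 1 < 0 := by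
      have h1 : γ' 1 = γ 1 := hγ'eq 1 ⟨zero_le_one, le_rfl⟩
      show E (γ' 1) < 0
      rw [h1]
      by_contra hcon
      push_neg at hcon
      have := hpos (γ 1) hcon
      nlinarith [sq_nonneg ‖γ 1‖]
    set A : Set ℝ := {t | t ∈ Set.Icc (0:ℝ) 1 ∧ g t < 0} with hA
    have hA1 : (1:ℝ) ∈ A := ⟨⟨zero_le_one, le_rfl⟩, hg1⟩
    have hAne : A.Nonempty := ⟨1, hA1⟩
    have hAbdd : BddBelow A := ⟨0, fun t ht => ht.1.1⟩
    set c : ℝ := sInf A with hc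
    have hcmem : c ∈ Set.Icc (0:ℝ) 1 :=
      ⟨le_csInf hAne fun t ht => ht.1.1, csInf_le hAbdd hA1⟩
    have hg0 : g 0 = 0 := by
      have h0 : γ' 0 = γ 0 := hγ'eq 0 ⟨le_rfl, zero_le_one⟩
      show E (γ' 0) = 0
      rw [h0, hγ0, hE0]
    have hgc_le : g c ≤ 0 := by
      have hclos : c ∈ closure A := csInf_mem_closure hAne hAbdd
      have hsub : closure A ⊆ {t | g t ≤ 0} := by
        apply closure_minimal
        · exact fun t ht => le_of_lt ht.2
        · exact isClosed_le hgcont continuous_const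
      exact hsub hclos
    have hgc : g c = 0 := by
      rcases eq_or_lt_of_le hgc_le with h | h
      · exact h
      exfalso
      have hc0 : 0 < c := by
        rcases eq_or_lt_of_le hcmem.1 with h0 | h0
        · exfalso; rw [← h0, hg0] at h; exact lt_irrefl 0 h
        · exact h0
      have hopen : IsOpen {t : ℝ | g t < 0} := isOpen_lt hgcont continuous_const
      obtain ⟨δ, hδ, hball⟩ := Metric.isOpen_iff.mp hopen c h
      set t : ℝ := max 0 (c - δ / 2) with htdef
      have htc : t < c := by
        apply max_lt hc0
        linarith
      have htIcc : t ∈ Set.Icc (0:ℝ) 1 :=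
        ⟨le_max_left _ _, le_trans (le_of_lt htc) hcmem.2⟩
      have htball : t ∈ Metric.ball c δ := by
        rw [Metric.mem_ball, Real.dist_eq, abs_of_nonpos (by linarith)]
        have : c - δ / 2 ≤ t := le_max_right _ _
        linarith
      have htA : t ∈ A := ⟨htIcc, hball htball⟩
      exact absurd (csInf_le hAbdd htA) (not_le.mpr htc)
    have hγc_ne : γ c ≠ 0 := by
      intro h0
      have hγ'c : γ' c = 0 := by rw [hγ'eq c hcmem, h0]
      have hcont : Continuous fun t => ‖γ' t‖ := continuous_norm.comp hγ'cont
      have hopen : IsOpen {t : ℝ | ‖γ' t‖ < ρ} := isOpen_lt hcont continuous_const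
      have hcmem' : c ∈ {t : ℝ | ‖γ' t‖ < ρ} := by
        simp only [Set.mem_setOf_eq, hγ'c, norm_zero]; exact hρ
      obtain ⟨δ, hδ, hball⟩ := Metric.isOpen_iff.mp hopen c hcmem'
      obtain ⟨a, haA, halt⟩ := exists_lt_of_csInf_lt hAne (show sInf A < c + δ by rw [← hc]; linarith)
      have hca : c ≤ a := csInf_le hAbdd haA
      have haball : a ∈ Metric.ball c δ := by
        rw [Metric.mem_ball, Real.dist_eq, abs_of_nonneg (by linarith)]
        linarith
      have hnorm : ‖γ' a‖ < ρ := hball haball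
      have hγ'a : γ' a = γ a := hγ'eq a haA.1
      have hane : γ a ≠ 0 := by
        intro h
        have hga : g a < 0 := haA.2
        have hga0 : g a = 0 := by show E (γ' a) = 0; rw [hγ'a, h, hE0]
        linarith
      have hsm' := hsm (γ a) hane (by rw [← hγ'a]; exact hnorm)
      have hEa : 0 < E (γ a) := by
        show 0 < ‖γ a‖ ^ 2 + F (γ a) - μ * P (γ a) - Q (γ a)
        linarith
      have hga : g a < 0 := haA.2
      have : g a = E (γ a) := by show E (γ' a) = E (γ a); rw [hγ'a]
      linarith [this ▸ hga]
    refine ⟨c, hcmem, (hNc (γ c)).mpr ⟨hγc_ne, ?_⟩⟩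
    have h1 : g c = E (γ c) := by show E (γ' c) = E (γ c); rw [hγ'eq c hcmem]
    rw [← h1]
    exact hgc
  -- the mountain-pass value set
  set S2 : Set ℝ := {y : ℝ | ∃ γ : ℝ → H, ContinuousOn γ (Set.Icc 0 1) ∧ γ 0 = 0 ∧ I (γ 1) < 0 ∧
      y = sSup ((fun t => I (γ t)) '' Set.Icc (0 : ℝ) 1)} with hS2
  -- every mountain pass value dominates some Nehari value
  have hS2low : ∀ y ∈ S2, (∃ v ∈ N, I v ≤ y) := by
    rintro y ⟨γ, hγ, hγ0, hγ1, rfl⟩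
    obtain ⟨t, htIcc, htN⟩ := hcross γ hγ hγ0 hγ1
    refine ⟨γ t, htN, ?_⟩
    have hbdd : BddAbove ((fun t => I (γ t)) '' Set.Icc (0:ℝ) 1) := by
      have hcomp : IsCompact ((fun t => I (γ t)) '' Set.Icc (0:ℝ) 1) := by
        apply IsCompact.image_of_continuousOn isCompact_Icc
        exact hC1.continuous.comp_continuousOn hγ
      exact hcomp.bddAbove
    exact le_csSup hbdd ⟨t, htIcc, rfl⟩
  -- I '' N ⊆ S2
  have hsub : I '' N ⊆ S2 := by
    rintro y ⟨v, hv, rfl⟩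
    have hv0 : v ≠ 0 := ((hNc v).mp hv).1
    obtain ⟨R, hR1, hRneg⟩ := hRex v hv0
    have hR0 : (0:ℝ) < R := lt_of_lt_of_le one_pos hR1
    refine ⟨fun t => (t * R) • v, ?_, ?_, ?_, ?_⟩
    · exact ((continuous_id.mul continuous_const).smul continuous_const).continuousOn
    · simp
    · simpa using hRneg
    · have hub : ∀ x ∈ (fun t => I ((t * R) • v)) '' Set.Icc (0:ℝ) 1, x ≤ I v := by
        rintro x ⟨s, hs, rfl⟩
        exact hfibmax v hv (s * R) (mul_nonneg hs.1 (le_of_lt hR0))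
      have hmem : I v ∈ (fun t => I ((t * R) • v)) '' Set.Icc (0:ℝ) 1 := by
        refine ⟨1 / R, ⟨by positivity, by rw [div_le_one hR0]; exact hR1⟩, ?_⟩
        simp only
        rw [one_div_mul_cancel (ne_of_gt hR0), one_smul]
      exact le_antisymm (le_csSup ⟨I v, hub⟩ hmem) (csSup_le ⟨_, hmem⟩ hub)
  constructor
  · rw [hSstar]
  · rcases Set.eq_empty_or_nonempty N with hNe | hNe
    · have hS2e : S2 = ∅ := by
        rw [Set.eq_empty_iff_forall_notMem]
        intro y hy
        obtain ⟨v, hv, -⟩ := hS2low y hy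
        rw [hNe] at hv
        exact hv
      rw [hNe, hS2e, Set.image_empty]
    · have hINe : (I '' N).Nonempty := hNe.image I
      have hS2ne : S2.Nonempty := hINe.mono hsub
      apply le_antisymm
      · apply le_csInf hS2ne
        intro y hy
        obtain ⟨v, hv, hvy⟩ := hS2low y hy
        exact le_trans (csInf_le hbddN ⟨v, hv, rfl⟩) hvy
      · apply csInf_le_csInf ?_ hINe hsub
        refine ⟨0, fun y hy => ?_⟩
        obtain ⟨v, hv, hvy⟩ := hS2low y hy
        exact le_trans (hIN0 v hv) hvy
end

section
/- Let 4 < p < 6 and suppose for each n, uₙ ∈ H₀¹(Ω) satisfies the Nehari identity ‖uₙ‖₀² + F₀(uₙ) = μₙ∫|uₙ|^p + ∫|uₙ|⁶ with μₙ → 0, the norms ‖uₙ‖₀ are bounded, and tₙ > 0 satisfies tₙuₙ ∈ N₀, i.e., tₙ²‖uₙ‖₀² + tₙ⁴F₀(uₙ) = tₙ⁶∫|uₙ|⁶. If the energies I_{μₙ}(uₙ) are bounded away from 0, then (tₙ) is bounded. -/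
open MeasureTheory Real

local notation "E3" => EuclideanSpace ℝ (Fin 3)

/-- The Riesz/Poisson double-integral term `F₀(u) = (1/4π) ∬ u²(x)u²(y)/|x-y|` over `Ω × Ω`. -/
noncomputable def rieszTerm₀ (s : Set E3) (u : E3 → ℝ) : ℝ :=
  (1 / (4 * Real.pi)) * ∫ x in s, ∫ y in s, (u x) ^ 2 * (u y) ^ 2 / dist x y

/-- The squared gradient (Dirichlet) norm `‖u‖₀² = ∫_Ω |∇u|²`. -/
noncomputable def gradNorm2₀ (s : Set E3) (u : E3 → ℝ) : ℝ :=
  ∫ x in s, ‖gradient u x‖ ^ 2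

/-- The limit-problem energy functional `I_μ` on `Ω`. -/
noncomputable def Imu₀ (Ω : Set E3) (μ p : ℝ) (u : E3 → ℝ) : ℝ :=
  1 / 2 * gradNorm2₀ Ω u + 1 / 4 * rieszTerm₀ Ω u -
    μ / p * ∫ x in Ω, |u x| ^ p - 1 / 6 * ∫ x in Ω, |u x| ^ 6

theorem stmt_16 (Ω : Set E3) (hΩ : IsOpen Ω) (hΩb : Bornology.IsBounded Ω)
    (p : ℝ) (hp4 : 4 < p) (hp6 : p < 6)
    (μ : ℕ → ℝ) (hμpos : ∀ n, 0 < μ n) (hμ : Filter.Tendsto μ Filter.atTop (nhds 0))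
    (u : ℕ → E3 → ℝ) (hdiff : ∀ n, Differentiable ℝ (u n))
    (hsupp : ∀ n, ∀ x ∉ Ω, u n x = 0)
    (hL6 : ∀ n, MemLp (u n) 6 (volume.restrict Ω))
    (hNehari : ∀ n, gradNorm2₀ Ω (u n) + rieszTerm₀ Ω (u n)
        = μ n * ∫ x in Ω, |u n x| ^ p + ∫ x in Ω, |u n x| ^ 6)
    (M : ℝ) (hM : ∀ n, gradNorm2₀ Ω (u n) ≤ M)
    (t : ℕ → ℝ) (ht : ∀ n, 0 < t n)
    (htN : ∀ n, (t n) ^ 2 * gradNorm2₀ Ω (u n) + (t n) ^ 4 * rieszTerm₀ Ω (u n)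
        = (t n) ^ 6 * ∫ x in Ω, |u n x| ^ 6)
    (δ : ℝ) (hδ : 0 < δ)
    (hI : ∀ n, δ ≤ Imu₀ Ω (μ n) p (u n)) :
    ∃ T : ℝ, ∀ n, t n ≤ T := by
  set V : ℝ := (volume Ω).toReal with hVdef
  have hV0 : 0 ≤ V := ENNReal.toReal_nonneg
  have h1V : (0:ℝ) < 1 + V := by linarith
  have hW : (0:ℝ) < 2*V*(1+V) + 1 := by nlinarith
  set ε₀ : ℝ := min (1/(1+V)) (δ / (2*V*(1+V) + 1)) with hε₀def
  have hε₀pos : 0 < ε₀ := lt_min (by positivity) (div_pos hδ hW)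
  have hp0 : (0:ℝ) < p := by linarith
  -- key quantitative fact
  have key : ∀ n, 2 ≤ (t n)^2 → μ n ≤ ε₀ → False := by
    intro n hs2 hμn
    set a : ℝ := gradNorm2₀ Ω (u n) with hadef
    set b : ℝ := rieszTerm₀ Ω (u n) with hbdef
    set c : ℝ := ∫ x in Ω, |u n x| ^ 6 with hcdef
    set d : ℝ := ∫ x in Ω, |u n x| ^ p with hddef
    set s : ℝ := t n with hsdef
    set m : ℝ := μ n with hmdef
    have hm0 : 0 < m := hμpos n
    have hs : 0 < s := ht n
    have ha : 0 ≤ a := integral_nonneg fun x => by positivity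
    have hb : 0 ≤ b := by
      rw [hbdef]
      unfold rieszTerm₀
      apply mul_nonneg (by positivity)
      refine integral_nonneg fun x => integral_nonneg fun y => ?_
      exact div_nonneg (by positivity) dist_nonneg
    have hc : 0 ≤ c := integral_nonneg fun x => by positivity
    have hd : 0 ≤ d := integral_nonneg fun x => Real.rpow_nonneg (abs_nonneg _) _
    -- finite measure on Ω
    haveI : IsFiniteMeasure (volume.restrict Ω) := by
      constructor
      rw [Measure.restrict_apply_univ]
      exact hΩb.measure_lt_top
    -- integrability of |u|^6
    have h6 : Integrable (fun x => |u n x| ^ (6:ℕ)) (volume.restrict Ω) := by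
      have h := (hL6 n).integrable_norm_rpow (by norm_num) (by norm_num)
      have heq : (fun x => ‖u n x‖ ^ ((6:ENNReal)).toReal) = fun x => |u n x| ^ (6:ℕ) := by
        funext x
        rw [Real.norm_eq_abs]
        rw [show ((6:ENNReal)).toReal = ((6:ℕ):ℝ) by norm_num, Real.rpow_natCast]
      rwa [heq] at h
    -- pointwise bound |u|^p ≤ 1 + |u|^6
    have hpt : ∀ x, |u n x| ^ p ≤ 1 + |u n x| ^ (6:ℕ) := by
      intro x
      have h6n : (0:ℝ) ≤ |u n x| ^ (6:ℕ) := pow_nonneg (abs_nonneg _) _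
      rcases le_total (|u n x|) 1 with h | h
      · have h1 : |u n x| ^ p ≤ 1 := Real.rpow_le_one (abs_nonneg _) h (by linarith)
        linarith
      · have h1 : |u n x| ^ p ≤ |u n x| ^ ((6:ℕ):ℝ) :=
          Real.rpow_le_rpow_of_exponent_le h (by push_cast; linarith)
        rw [Real.rpow_natCast] at h1
        linarith
    -- integrability of |u|^p
    have hum : AEStronglyMeasurable (fun x => |u n x| ^ p) (volume.restrict Ω) :=
      (((hdiff n).continuous.abs).rpow_const fun x => Or.inr hp0.le).aestronglyMeasurable
    have hpint : Integrable (fun x => |u n x| ^ p) (volume.restrict Ω) := by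
      refine Integrable.mono' ((integrable_const 1).add h6) hum
        (Filter.Eventually.of_forall fun x => ?_)
      rw [Real.norm_eq_abs, abs_of_nonneg (Real.rpow_nonneg (abs_nonneg _) _)]
      exact hpt x
    -- Hölder-type bound: d ≤ V + c
    have hdVc : d ≤ V + c := by
      have hint : Integrable (fun x => 1 + |u n x| ^ (6:ℕ)) (volume.restrict Ω) :=
        (integrable_const 1).add h6
      have hmono := integral_mono_of_nonneg
        (f := fun x => |u n x| ^ p) (g := fun x => 1 + |u n x| ^ (6:ℕ))
        (Filter.Eventually.of_forall fun x => Real.rpow_nonneg (abs_nonneg _) _)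
        hint (Filter.Eventually.of_forall hpt)
      rw [integral_add (integrable_const 1) h6, setIntegral_const, smul_eq_mul, mul_one] at hmono
      exact hmono
    -- linearize the two "greedy" integrals
    have hP : (∫ x in Ω, (|u n x| ^ p + ∫ y in Ω, |u n y| ^ 6)) = d + V * c := by
      rw [integral_add hpint (integrable_const _), setIntegral_const, smul_eq_mul]
      rfl
    have hQ : (∫ x in Ω, (|u n x| ^ p - 1/6 * ∫ y in Ω, |u n y| ^ 6)) = d - V * (1/6 * c) := by
      rw [integral_sub hpint (integrable_const _), setIntegral_const, smul_eq_mul]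
      rfl
    have hN : a + b = m * (d + V * c) := by
      have h := hNehari n
      rw [hP] at h
      exact h
    have hIn : δ ≤ 1/2 * a + 1/4 * b - m/p * (d - V * (1/6 * c)) := by
      have h := hI n
      unfold Imu₀ at h
      rw [hQ] at h
      exact h
    -- from the N₀ identity: 2c ≤ a + b
    have e : s^2 * a + s^4 * b = s^6 * c := htN n
    clear_value a b c d s m
    have hs4 : (0:ℝ) < s^4 := by positivity
    have hA : s^2 * a ≤ s^4 * a := by nlinarith [mul_nonneg ha (sub_nonneg.mpr hs2)]
    have hC : 2*(s^4*c) ≤ s^6*c := by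
      nlinarith [mul_nonneg (mul_nonneg (pow_nonneg hs.le 4) hc) (sub_nonneg.mpr hs2)]
    have h2c : 2*c ≤ a + b := by
      have h2 : s^4 * (2*c) ≤ s^4 * (a+b) := by linarith only [hC, hA, e]
      exact le_of_mul_le_mul_left h2 hs4
    have hcP : 2*c ≤ m * (d + V * c) := by linarith only [h2c, hN]
    -- smallness of m
    have hm1 : m * (1+V) ≤ 1 := (le_div_iff₀ h1V).mp (le_trans hμn (min_le_left _ _))
    have hm2 : m * (2*V*(1+V) + 1) ≤ δ := (le_div_iff₀ hW).mp (le_trans hμn (min_le_right _ _))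
    have hmV : 0 ≤ m * V := mul_nonneg hm0.le hV0
    have hmle1 : m ≤ 1 := by linarith only [hm1, hmV]
    have hX4 : m/p ≤ 1/4 := by
      rw [div_le_iff₀ hp0]
      linarith only [hmle1, hp4]
    -- energy bound : δ ≤ m(d+Vc)/2 + Vc/24
    have hX0 : 0 ≤ m/p := div_nonneg hm0.le hp0.le
    have hXd : 0 ≤ m/p * d := mul_nonneg hX0 hd
    have hVc0 : 0 ≤ V * (1/6 * c) := mul_nonneg hV0 (by linarith)
    have hXc : m/p * (V * (1/6 * c)) ≤ 1/4 * (V * (1/6 * c)) :=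
      mul_le_mul_of_nonneg_right hX4 hVc0
    have hδ1 : δ ≤ m * (d + V*c) / 2 + 1/24 * (V*c) := by linarith only [hIn, hXd, hXc, hb, hN]
    -- bound P = d + V*c by 2V
    have hP0 : 0 ≤ d + V*c := by linarith only [mul_nonneg hV0 hc, hd]
    have hAA : m * (1+V) * (d + V*c) ≤ 1 * (d + V*c) := mul_le_mul_of_nonneg_right hm1 hP0
    have hBB : (1+V) * (2*c) ≤ (1+V) * (m * (d + V*c)) := mul_le_mul_of_nonneg_left hcP h1V.le
    have hP2V : d + V*c ≤ 2*V := by linarith only [hdVc, hAA, hBB]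
    -- final contradiction
    have hD : m * (d + V*c) ≤ m * (2*V) := mul_le_mul_of_nonneg_left hP2V hm0.le
    have hCC : V * (2*c) ≤ V * (m * (d + V*c)) := mul_le_mul_of_nonneg_left hcP hV0
    have hEE : V * (m * (d + V*c)) ≤ V * (m * (2*V)) :=
      mul_le_mul_of_nonneg_left hD hV0
    have hmVV : 0 ≤ m * V * V := mul_nonneg hmV hV0
    linarith only [hδ1, hD, hCC, hEE, hm2, hmV, hmVV, hm0, hδ, hmle1]
  -- eventually μ n < ε₀, hence eventually t n ≤ 2
  have hev : ∀ᶠ n in Filter.atTop, μ n < ε₀ := hμ.eventually_lt_const hε₀pos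
  obtain ⟨N, hN⟩ := Filter.eventually_atTop.mp hev
  refine ⟨max 2 ((Finset.range (N+1)).sup' ⟨N, Finset.self_mem_range_succ N⟩ t), fun n => ?_⟩
  rcases le_or_gt n N with h | h
  · exact le_trans (Finset.le_sup' t (Finset.mem_range_succ_iff.mpr h)) (le_max_right _ _)
  · have hμn : μ n < ε₀ := hN n h.le
    have htn2 : t n ≤ 2 := by
      by_contra h2
      push_neg at h2
      exact key n (by nlinarith) hμn.le
    exact le_trans htn2 (le_max_left _ _)
end
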